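/- For an n×n matrix A over a commutative ring, if m of its rows are pairwise equal (i.e., there exist m distinct row indices whose rows coincide as vectors), then m! divides the permanent of A. -/

import Mathlib

/-- The permanent of a square matrix. -/
def perm {n R : Type*} [DecidableEq n] [Fintype n] [CommRing R] (A : Matrix n n R) : R :=
  ∑ σ : Equiv.Perm n, ∏ i, A i (σ i)

/-- If an n×n matrix has m pairwise equal rows (given by an injection of row indices),
then m! divides its permanent. -/
theorem stmt0 {n m : ℕ} {R : Type*} [CommRing R] (A : Matrix (Fin n) (Fin n) R)
    (f : Fin m → Fin n) (hf : Function.Injective f)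
    (heq : ∀ a b : Fin m, A (f a) = A (f b)) :
    ((m.factorial : ℤ) : R) ∣ perm A := by
  classical
  set fe : Fin m ≃ Set.range f := Equiv.ofInjective f hf with hfe
  set e : Equiv.Perm (Fin m) →* Equiv.Perm (Fin n) := Equiv.Perm.extendDomainHom fe with he
  set t : Equiv.Perm (Fin n) → R := fun σ => ∏ i, A i (σ i) with htdef
  have hrow : ∀ (π : Equiv.Perm (Fin m)) (j : Fin n), A (e π j) = A j := by
    intro π j
    by_cases hj : j ∈ Set.range f
    · obtain ⟨a, rfl⟩ := hj
      have h1 : (fe a : Fin n) = f a := rfl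
      have h2 : e π (f a) = f (π a) := by
        have := Equiv.Perm.extendDomain_apply_image π fe a
        simpa [he, Equiv.Perm.extendDomainHom, h1, hfe] using this
      rw [h2]
      exact heq _ _
    · have : e π j = j := Equiv.Perm.extendDomain_apply_not_subtype π fe hj
      rw [this]
  have hinv : ∀ (σ : Equiv.Perm (Fin n)) (π : Equiv.Perm (Fin m)),
      t (σ * e π) = t σ := by
    intro σ π
    have step : ∏ i, A i (σ (e π i)) = ∏ j, A (e π⁻¹ j) (σ j) := by
      apply Fintype.prod_equiv (e π)
      intro i
      have : e π⁻¹ (e π i) = i := by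
        rw [map_inv]; exact (e π).symm_apply_apply i
      rw [this]
    simp only [htdef, Equiv.Perm.mul_apply]
    rw [step]
    exact Finset.prod_congr rfl fun j _ => by rw [hrow]
  set H : Subgroup (Equiv.Perm (Fin n)) := e.range with hH
  have tconst : ∀ σ τ : Equiv.Perm (Fin n),
      (QuotientGroup.mk σ : _ ⧸ H) = QuotientGroup.mk τ → t σ = t τ := by
    intro σ τ h
    rw [QuotientGroup.eq] at h
    obtain ⟨π, hπ⟩ := h
    have : τ = σ * e π := by rw [hπ]; group
    rw [this, hinv]
  set E : Equiv.Perm (Fin n) ≃ (Equiv.Perm (Fin n) ⧸ H) × H :=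
    Subgroup.groupEquivQuotientProdSubgroup with hE
  have hE1 : ∀ σ, (E σ).1 = QuotientGroup.mk σ := fun σ => rfl
  have key : perm A = ∑ p : (Equiv.Perm (Fin n) ⧸ H) × H, t (E.symm p) :=
    (Equiv.sum_comp E.symm t).symm
  have key2 : ∀ p : (Equiv.Perm (Fin n) ⧸ H) × H, t (E.symm p) = t p.1.out := by
    intro p
    apply tconst
    have h1 : (QuotientGroup.mk (E.symm p) : _ ⧸ H) = p.1 := by
      rw [← hE1 (E.symm p), E.apply_symm_apply]
    rw [h1, QuotientGroup.out_eq']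
  have hcard : (Fintype.card H : R) = (m.factorial : R) := by
    have h1 : Fintype.card H = Fintype.card (Equiv.Perm (Fin m)) :=
      (Fintype.card_congr (MonoidHom.ofInjective
        (Equiv.Perm.extendDomainHom_injective fe)).toEquiv).symm
    rw [h1, Fintype.card_perm, Fintype.card_fin]
  have final : perm A = (m.factorial : R) * ∑ q : Equiv.Perm (Fin n) ⧸ H, t q.out := by
    rw [key]
    rw [Finset.sum_congr rfl fun p _ => key2 p]
    rw [Fintype.sum_prod_type]
    simp only [Finset.sum_const, Finset.card_univ, nsmul_eq_mul]
    rw [← Finset.mul_sum, hcard]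
  refine ⟨∑ q : Equiv.Perm (Fin n) ⧸ H, t q.out, ?_⟩
  rw [final]
  push_cast
  ring
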